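/- Every graph G satisfies pw(G) ≤ si(G)·ω(G) − 1, where pw is pathwidth and ω is the clique number. -/
import Mathlib


/-- `(a, b, L)` is a `d`-simultaneous interval representation of `G`:
each vertex `v` gets a nonempty open interval `(a v, b v)` and a label set
`L v ⊆ {1,…,d}`, and distinct vertices are adjacent iff both their intervals
and their label sets intersect. -/
def IsSIRep {V : Type*} (G : SimpleGraph V) (d : ℕ)
    (a b : V → ℝ) (L : V → Finset (Fin d)) : Prop :=
  (∀ v, a v < b v) ∧
  ∀ u v : V, u ≠ v →
    (G.Adj u v ↔ (Set.Ioo (a u) (b u) ∩ Set.Ioo (a v) (b v)).Nonempty ∧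
      (L u ∩ L v).Nonempty)

/-- The simultaneous interval number of `G`. -/
noncomputable def si {V : Type*} (G : SimpleGraph V) : ℕ :=
  sInf {d | ∃ a b L, IsSIRep G d a b L}

/-- A path decomposition of `G` with bags `X 0, …, X (p-1)`. -/
def IsPathDecomp {V : Type*} (G : SimpleGraph V) (p : ℕ) (X : Fin p → Finset V) : Prop :=
  (∀ v, ∃ i, v ∈ X i) ∧
  (∀ u v, G.Adj u v → ∃ i, u ∈ X i ∧ v ∈ X i) ∧
  (∀ v, ∀ i j l : Fin p, i ≤ j → j ≤ l → v ∈ X i → v ∈ X l → v ∈ X j)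

/-- `S` is an independent set in `G`. -/
def IsIndepSet {V : Type*} (G : SimpleGraph V) (S : Finset V) : Prop :=
  ∀ u ∈ S, ∀ v ∈ S, u ≠ v → ¬ G.Adj u v

/-- The path-independence number of `G`. -/
noncomputable def pathAlpha {V : Type*} (G : SimpleGraph V) : ℕ :=
  sInf {k | ∃ (p : ℕ) (X : Fin p → Finset V), IsPathDecomp G p X ∧
    ∀ (i : Fin p) (S : Finset V), S ⊆ X i → IsIndepSet G S → S.card ≤ k}

/-- The pathwidth of `G`. -/
noncomputable def pathwidth {V : Type*} (G : SimpleGraph V) : ℕ :=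
  sInf {w | ∃ (p : ℕ) (X : Fin p → Finset V), IsPathDecomp G p X ∧
    ∀ i, (X i).card ≤ w + 1}

/-- The clique number of `G`. -/
noncomputable def cliqueNumber {V : Type*} (G : SimpleGraph V) : ℕ :=
  sSup {n | ∃ s : Finset V, G.IsNClique n s}

open Finset


lemma exists_sirep {V : Type*} [Fintype V] (G : SimpleGraph V) :
    ∃ d a b L, IsSIRep G d a b L := by
  classical
  set n := Fintype.card V with hn
  set f : V ≃ Fin n := Fintype.equivFin V with hf
  refine ⟨n * n, fun _ => 0, fun _ => 1,
    fun v => (Finset.univ.filter (G.Adj v)).biUnion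
      (fun u => {finProdFinEquiv (f u, f v), finProdFinEquiv (f v, f u)}),
    fun _ => one_pos, fun u v huv => ?_⟩
  constructor
  · intro hadj
    refine ⟨⟨1/2, ⟨by norm_num, by norm_num⟩, ⟨by norm_num, by norm_num⟩⟩,
      ⟨finProdFinEquiv (f u, f v), ?_⟩⟩
    simp only [Finset.mem_inter, Finset.mem_biUnion, Finset.mem_filter, Finset.mem_univ,
      true_and, Finset.mem_insert, Finset.mem_singleton]
    exact ⟨⟨v, hadj, Or.inr rfl⟩, ⟨u, hadj.symm, Or.inl rfl⟩⟩
  · rintro ⟨-, c, hc⟩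
    simp only [Finset.mem_inter, Finset.mem_biUnion, Finset.mem_filter, Finset.mem_univ,
      true_and, Finset.mem_insert, Finset.mem_singleton] at hc
    obtain ⟨⟨w, hw, hc1⟩, ⟨w', hw', hc2⟩⟩ := hc
    rcases hc1 with h1 | h1 <;> rcases hc2 with h2 | h2 <;>
        rw [h1] at h2 <;>
        obtain ⟨hp, hq⟩ := Prod.mk.injEq .. ▸ finProdFinEquiv.injective h2
    · exact absurd (f.injective hq) huv
    · exact (f.injective hp) ▸ hw
    · exact ((f.injective hp) ▸ hw' : G.Adj v u).symm
    · exact absurd (f.injective hp) huv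


lemma sirep_pathwidth {V : Type*} [Fintype V] (G : SimpleGraph V) (d : ℕ)
    (a b : V → ℝ) (L : V → Finset (Fin d)) (h : IsSIRep G d a b L) :
    pathwidth G ≤ d * cliqueNumber G - 1 := by
  classical
  obtain ⟨hab, hadj⟩ := h
  set ω := cliqueNumber G with hω
  have hbdd : BddAbove {n | ∃ s : Finset V, G.IsNClique n s} :=
    ⟨Fintype.card V, fun n hn => by
      obtain ⟨s, hs⟩ := hn
      exact hs.2 ▸ Finset.card_le_univ s⟩
  have hclique : ∀ s : Finset V, G.IsClique ↑s → s.card ≤ ω := fun s hs =>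
    le_csSup hbdd ⟨s, hs, rfl⟩
  set V₁ : Finset V := univ.filter (fun v => (L v).Nonempty) with hV₁
  set V₀ : Finset V := univ.filter (fun v => ¬ (L v).Nonempty) with hV₀
  set T : Finset ℝ := V₁.image a with hT
  set m := T.card with hm
  set e : Fin m ≃o {x // x ∈ T} := T.orderIsoOfFin rfl with he
  set n₀ := V₀.card with hn₀
  set ev : Fin n₀ ≃ {v // v ∈ V₀} := V₀.equivFin.symm with hev
  set B : ℝ → Finset V := fun x =>
    univ.filter (fun u => (L u).Nonempty ∧ a u ≤ x ∧ x < b u) with hB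
  have hmemB : ∀ (x : ℝ) (u : V),
      u ∈ B x ↔ (L u).Nonempty ∧ a u ≤ x ∧ x < b u := by
    intro x u; simp [hB]
  set X : Fin (m + n₀) → Finset V := fun i =>
    if hi : (i : ℕ) < m then B ((e ⟨i, hi⟩ : {x // x ∈ T}) : ℝ)
    else {(ev ⟨(i : ℕ) - m, by have := i.isLt; omega⟩ : V)} with hX
  have hXlt : ∀ (i : Fin (m + n₀)) (hi : (i : ℕ) < m),
      X i = B ((e ⟨i, hi⟩ : {x // x ∈ T}) : ℝ) := by
    intro i hi; simp only [hX]; rw [dif_pos hi]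
  have hXge : ∀ (i : Fin (m + n₀)) (hi : ¬ (i : ℕ) < m) (hlt : (i : ℕ) - m < n₀),
      X i = {(ev ⟨(i : ℕ) - m, hlt⟩ : V)} := by
    intro i hi hlt; simp only [hX]; rw [dif_neg hi]
  -- membership at the sweep point a v, for v with nonempty labels
  have hsweep : ∀ v : V, (L v).Nonempty → ∃ i : Fin (m + n₀), X i = B (a v) := by
    intro v hv
    have hvT : a v ∈ T := mem_image.mpr ⟨v, by simp [hV₁, hv], rfl⟩
    set i0 : Fin m := e.symm ⟨a v, hvT⟩ with hi0
    refine ⟨⟨(i0 : ℕ), by have := i0.isLt; omega⟩, ?_⟩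
    rw [hXlt _ i0.isLt]
    have h1 : (⟨(i0 : ℕ), i0.isLt⟩ : Fin m) = i0 := rfl
    rw [h1, hi0, OrderIso.apply_symm_apply]
  have cover : ∀ v : V, ∃ i, v ∈ X i := by
    intro v
    by_cases hv : (L v).Nonempty
    · obtain ⟨i, hi⟩ := hsweep v hv
      exact ⟨i, hi ▸ (hmemB _ _).mpr ⟨hv, le_refl _, hab v⟩⟩
    · have hv0 : v ∈ V₀ := mem_filter.mpr ⟨mem_univ v, hv⟩
      set j : Fin n₀ := ev.symm ⟨v, hv0⟩ with hj
      refine ⟨⟨m + (j : ℕ), by have := j.isLt; omega⟩, ?_⟩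
      rw [hXge _ (show ¬ m + (j : ℕ) < m by omega) (show m + (j : ℕ) - m < n₀ by have := j.isLt; omega)]
      have h1 : (⟨m + (j : ℕ) - m, by have := j.isLt; omega⟩ : Fin n₀) = j := by
        apply Fin.ext; simp
      rw [h1, hj, Equiv.apply_symm_apply, mem_singleton]
  have key : ∀ u v, G.Adj u v → a u ≤ a v → ∃ i, u ∈ X i ∧ v ∈ X i := by
    intro u v huv hle
    obtain ⟨⟨z, hzu, hzv⟩, hlab⟩ := (hadj u v huv.ne).mp huv
    obtain ⟨c, hc⟩ := hlab
    have hLu : (L u).Nonempty := ⟨c, (mem_inter.mp hc).1⟩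
    have hLv : (L v).Nonempty := ⟨c, (mem_inter.mp hc).2⟩
    obtain ⟨i, hi⟩ := hsweep v hLv
    refine ⟨i, hi ▸ (hmemB _ _).mpr ⟨hLu, hle, lt_trans hzv.1 hzu.2⟩,
      hi ▸ (hmemB _ _).mpr ⟨hLv, le_refl _, hab v⟩⟩
  have edges : ∀ u v, G.Adj u v → ∃ i, u ∈ X i ∧ v ∈ X i := by
    intro u v huv
    rcases le_total (a u) (a v) with hle | hle
    · exact key u v huv hle
    · obtain ⟨i, h1, h2⟩ := key v u huv.symm hle
      exact ⟨i, h2, h1⟩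
  have conv : ∀ v, ∀ i j l : Fin (m + n₀),
      i ≤ j → j ≤ l → v ∈ X i → v ∈ X l → v ∈ X j := by
    intro v i j l hij hjl hvi hvl
    have hij' : (i : ℕ) ≤ (j : ℕ) := hij
    have hjl' : (j : ℕ) ≤ (l : ℕ) := hjl
    by_cases hl : (l : ℕ) < m
    · have hjm : (j : ℕ) < m := lt_of_le_of_lt hjl' hl
      have him : (i : ℕ) < m := lt_of_le_of_lt hij' hjm
      rw [hXlt i him] at hvi
      rw [hXlt l hl] at hvl
      rw [hXlt j hjm]
      obtain ⟨hLv, hvi1, hvi2⟩ := (hmemB _ _).mp hvi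
      obtain ⟨-, hvl1, hvl2⟩ := (hmemB _ _).mp hvl
      have e1 : ((e ⟨(i : ℕ), him⟩ : {x // x ∈ T}) : ℝ) ≤ (e ⟨(j : ℕ), hjm⟩ : {x // x ∈ T}) :=
        Subtype.coe_le_coe.mpr (e.monotone (Fin.mk_le_mk.mpr hij'))
      have e2 : ((e ⟨(j : ℕ), hjm⟩ : {x // x ∈ T}) : ℝ) ≤ (e ⟨(l : ℕ), hl⟩ : {x // x ∈ T}) :=
        Subtype.coe_le_coe.mpr (e.monotone (Fin.mk_le_mk.mpr hjl'))
      exact (hmemB _ _).mpr ⟨hLv, le_trans hvi1 e1, lt_of_le_of_lt e2 hvl2⟩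
    · have hlt : (l : ℕ) - m < n₀ := by have := l.isLt; omega
      rw [hXge l hl hlt, mem_singleton] at hvl
      have hv0 : v ∈ V₀ := hvl ▸ (ev ⟨(l : ℕ) - m, hlt⟩).2
      have hvL : ¬ (L v).Nonempty := (mem_filter.mp hv0).2
      have him : ¬ (i : ℕ) < m := by
        intro hc
        rw [hXlt i hc] at hvi
        exact hvL ((hmemB _ _).mp hvi).1
      have hilt : (i : ℕ) - m < n₀ := by have := i.isLt; omega
      rw [hXge i him hilt, mem_singleton] at hvi
      have : (⟨(i : ℕ) - m, hilt⟩ : Fin n₀) = ⟨(l : ℕ) - m, hlt⟩ :=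
        ev.injective (Subtype.coe_injective (hvi.symm.trans hvl))
      have hil : (i : ℕ) = (l : ℕ) := by
        have := Fin.mk.injEq .. ▸ this
        omega
      have hji : j = i := Fin.ext (by omega)
      rw [hji, hXge i him hilt, mem_singleton]; exact hvi
  have hsize : ∀ i : Fin (m + n₀), (X i).card ≤ d * ω - 1 + 1 := by
    intro i
    by_cases hi : (i : ℕ) < m
    · rw [hXlt i hi]
      set x : ℝ := ((e ⟨(i : ℕ), hi⟩ : {x // x ∈ T}) : ℝ) with hx
      have hxT : x ∈ T := (e ⟨(i : ℕ), hi⟩).2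
      obtain ⟨v, hv1, hva⟩ := mem_image.mp hxT
      have hvL : (L v).Nonempty := (mem_filter.mp hv1).2
      obtain ⟨ℓ0, -⟩ := hvL
      have hd : 1 ≤ d := ℓ0.pos
      have hω1 : 1 ≤ ω := by
        refine le_csSup hbdd ⟨{v}, ?_, card_singleton v⟩
        simp [SimpleGraph.isClique_iff]
      have h1 : 1 ≤ d * ω := by
        have := Nat.mul_le_mul hd hω1; simpa using this
      have hsub : B x ⊆ univ.biUnion
          (fun ℓ : Fin d => univ.filter fun u => ℓ ∈ L u ∧ a u ≤ x ∧ x < b u) := by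
        intro u hu
        obtain ⟨hLu, h1u, h2u⟩ := (hmemB _ _).mp hu
        obtain ⟨ℓ, hℓ⟩ := hLu
        exact mem_biUnion.mpr ⟨ℓ, mem_univ _, mem_filter.mpr ⟨mem_univ _, hℓ, h1u, h2u⟩⟩
      have hC : ∀ ℓ : Fin d,
          (univ.filter fun u => ℓ ∈ L u ∧ a u ≤ x ∧ x < b u).card ≤ ω := by
        intro ℓ
        apply hclique
        intro u hu w hw hne
        simp only [coe_filter, Set.mem_setOf_eq, mem_univ, true_and] at hu hw
        refine (hadj u w hne).mpr ⟨?_, ⟨ℓ, mem_inter.mpr ⟨hu.1, hw.1⟩⟩⟩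
        rw [Set.Ioo_inter_Ioo]
        exact Set.nonempty_Ioo.mpr
          (max_lt (lt_min (hab u) (lt_of_le_of_lt hu.2.1 hw.2.2))
            (lt_min (lt_of_le_of_lt hw.2.1 hu.2.2) (hab w)))
      calc (B x).card
          ≤ (univ.biUnion (fun ℓ : Fin d =>
              univ.filter fun u => ℓ ∈ L u ∧ a u ≤ x ∧ x < b u)).card :=
            card_le_card hsub
        _ ≤ ∑ ℓ : Fin d, (univ.filter fun u => ℓ ∈ L u ∧ a u ≤ x ∧ x < b u).card :=
            card_biUnion_le
        _ ≤ ∑ _ℓ : Fin d, ω := sum_le_sum fun ℓ _ => hC ℓ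
        _ = d * ω := by simp [Finset.sum_const, mul_comm]
        _ = d * ω - 1 + 1 := (Nat.succ_pred_eq_of_pos h1).symm
    · rw [hXge i hi (by have := i.isLt; omega), card_singleton]
      omega
  exact Nat.sInf_le ⟨m + n₀, X, ⟨cover, edges, conv⟩, hsize⟩

/-- Every graph satisfies `pw(G) ≤ si(G)·ω(G) − 1`. -/
theorem pathwidth_le_si_mul_cliqueNumber {V : Type*} [Fintype V]
    (G : SimpleGraph V) :
    pathwidth G ≤ si G * cliqueNumber G - 1 := by
  have hne : {d | ∃ a b L, IsSIRep G d a b L}.Nonempty := exists_sirep G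
  obtain ⟨a, b, L, hrep⟩ := Nat.sInf_mem hne
  exact sirep_pathwidth G (si G) a b L hrep
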